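/- Fix n ≥ 1, let J be the standard 2n×2n symplectic matrix, and let Sp₂ₙ(ℂ) = {g : gᵀJg = J}. Let M, N be nonzero symmetric 2n×2n complex matrices of rank at most 2. Say M has isotropic range if xᵀJy = 0 for all x, y in the column space of M. Then there exist g ∈ Sp₂ₙ(ℂ) and a nonzero scalar λ ∈ ℂ with g·M·gᵀ = λ·N if and only if rank M = rank N and (M has isotropic range ↔ N has isotropic range). Consequently, up to the Sp₂ₙ(ℂ)-action and scalar, every such matrix is exactly one of: a rank-one matrix; a rank-two matrix whose range is a J-isotropic plane; or a rank-two matrix whose range is a non-isotropic plane. -/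

import Mathlib

open Matrix

/-- A symmetric matrix `M` has isotropic range (for the standard symplectic form `J`) if
`xᵀ J y = 0` for all `x`, `y` in the column space of `M`. -/
def HasIsotropicRange (n : ℕ) (M : Matrix (Fin n ⊕ Fin n) (Fin n ⊕ Fin n) ℂ) : Prop :=
  ∀ u v : Fin n ⊕ Fin n → ℂ,
    dotProduct (M.mulVec u) ((Matrix.J (Fin n) ℂ).mulVec (M.mulVec v)) = 0

variable {n : ℕ}

/-- The symplectic form. -/
noncomputable def om (n : ℕ) (x y : Fin n ⊕ Fin n → ℂ) : ℂ :=
  x ⬝ᵥ ((Matrix.J (Fin n) ℂ) *ᵥ y)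

lemma dot_shift (M : Matrix (Fin n ⊕ Fin n) (Fin n ⊕ Fin n) ℂ) (x y : Fin n ⊕ Fin n → ℂ) :
    (M *ᵥ x) ⬝ᵥ y = x ⬝ᵥ (Mᵀ *ᵥ y) := by
  rw [dotProduct_comm, dotProduct_mulVec, mulVec_transpose, dotProduct_comm]

lemma om_add_right (x y z : Fin n ⊕ Fin n → ℂ) : om n x (y + z) = om n x y + om n x z := by
  simp [om, mulVec_add, dotProduct_add]

lemma om_add_left (x y z : Fin n ⊕ Fin n → ℂ) : om n (x + y) z = om n x z + om n y z := by
  simp [om, add_dotProduct]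

lemma om_smul_right (c : ℂ) (x y : Fin n ⊕ Fin n → ℂ) : om n x (c • y) = c * om n x y := by
  simp [om, mulVec_smul]

lemma om_smul_left (c : ℂ) (x y : Fin n ⊕ Fin n → ℂ) : om n (c • x) y = c * om n x y := by
  simp [om, smul_dotProduct]

lemma om_skew (x y : Fin n ⊕ Fin n → ℂ) : om n x y = - om n y x := by
  rw [om, om, dotProduct_comm, dot_shift, J_transpose, neg_mulVec, dotProduct_neg]

lemma om_self (x : Fin n ⊕ Fin n → ℂ) : om n x x = 0 := by
  have := om_skew x x; linear_combination this / 2 -- maybe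

lemma om_sub_right (x y z : Fin n ⊕ Fin n → ℂ) : om n x (y - z) = om n x y - om n x z := by
  simp [om, mulVec_sub, dotProduct_sub]

lemma dot_nondeg {x : Fin n ⊕ Fin n → ℂ} (h : ∀ y, x ⬝ᵥ y = 0) : x = 0 := by
  funext i
  simpa [dotProduct_single] using h (Pi.single i 1)

lemma om_nondeg {x : Fin n ⊕ Fin n → ℂ} (h : ∀ y, om n x y = 0) : x = 0 := by
  have h1 : x ᵥ* (J (Fin n) ℂ) = 0 := by
    apply dot_nondeg
    intro y
    have := h y
    rwa [om, dotProduct_mulVec] at this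
  have h2 : x ᵥ* ((J (Fin n) ℂ) * (- J (Fin n) ℂ)) = 0 := by
    rw [← vecMul_vecMul, h1, zero_vecMul]
  rwa [Matrix.mul_neg, J_squared, neg_neg, vecMul_one] at h2

lemma om_sub_left (x y z : Fin n ⊕ Fin n → ℂ) : om n (x - y) z = om n x z - om n y z := by
  simp [om, sub_dotProduct]

/-- If the kernel of `om x ·` is contained in the kernel of `om y ·`, then `y` is a
multiple of `x`. -/
lemma om_ker_le {x y : Fin n ⊕ Fin n → ℂ} (h : ∀ w, om n x w = 0 → om n y w = 0) :
    ∃ c : ℂ, y = c • x := by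
  by_cases hx : ∀ w, om n x w = 0
  · have hx0 : x = 0 := om_nondeg hx
    have hy0 : y = 0 := om_nondeg fun w => h w (hx w)
    exact ⟨0, by simp [hx0, hy0]⟩
  · push_neg at hx
    obtain ⟨w₀, hw₀⟩ := hx
    refine ⟨om n y w₀ / om n x w₀, ?_⟩
    have key : ∀ w, om n (y - (om n y w₀ / om n x w₀) • x) w = 0 := by
      intro w
      have h1 : om n x (w - (om n x w / om n x w₀) • w₀) = 0 := by
        rw [om_sub_right, om_smul_right]
        field_simp
        ring
      have h2 := h _ h1
      rw [om_sub_right, om_smul_right] at h2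
      rw [om_sub_left, om_smul_left]
      field_simp at h2 ⊢
      linear_combination h2
    have h0 := om_nondeg key
    rw [sub_eq_zero] at h0
    exact h0

/-- Analogue for the dot-product pairing. -/
lemma dot_ker_le {x y : Fin n ⊕ Fin n → ℂ} (h : ∀ w, x ⬝ᵥ w = 0 → y ⬝ᵥ w = 0) :
    ∃ c : ℂ, y = c • x := by
  by_cases hx : ∀ w, x ⬝ᵥ w = 0
  · have hx0 : x = 0 := dot_nondeg hx
    have hy0 : y = 0 := dot_nondeg fun w => h w (hx w)
    exact ⟨0, by simp [hx0, hy0]⟩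
  · push_neg at hx
    obtain ⟨w₀, hw₀⟩ := hx
    refine ⟨y ⬝ᵥ w₀ / x ⬝ᵥ w₀, ?_⟩
    have key : ∀ w, (y - (y ⬝ᵥ w₀ / x ⬝ᵥ w₀) • x) ⬝ᵥ w = 0 := by
      intro w
      have h1 : x ⬝ᵥ (w - (x ⬝ᵥ w / x ⬝ᵥ w₀) • w₀) = 0 := by
        rw [dotProduct_sub, dotProduct_smul, smul_eq_mul, div_mul_cancel₀ _ hw₀, sub_self]
      have h2 := h _ h1
      rw [dotProduct_sub, dotProduct_smul] at h2
      rw [sub_dotProduct, smul_dotProduct]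
      field_simp at h2 ⊢
      linear_combination h2
    have h0 := dot_nondeg key
    rw [sub_eq_zero] at h0
    exact h0

/-- Dual vector to a pair of independent vectors. -/
lemma exists_dual {x y : Fin n ⊕ Fin n → ℂ} (hx : x ≠ 0) (hy : ∀ c : ℂ, y ≠ c • x) :
    ∃ u, x ⬝ᵥ u = 1 ∧ y ⬝ᵥ u = 0 := by
  by_cases h : ∀ w, y ⬝ᵥ w = 0 → x ⬝ᵥ w = 0
  · obtain ⟨c, hc⟩ := dot_ker_le h
    exfalso
    rcases eq_or_ne c 0 with h0 | h0
    · exact hx (by simp [hc, h0])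
    · exact hy c⁻¹ (by rw [hc]; rw [smul_smul]; field_simp; rw [one_smul])
  · push_neg at h
    obtain ⟨w, hw1, hw2⟩ := h
    exact ⟨(x ⬝ᵥ w)⁻¹ • w, by rw [dotProduct_smul, smul_eq_mul, inv_mul_cancel₀ hw2], by rw [dotProduct_smul]; simp [hw1]⟩

lemma vecMulVec_mulVec (a b x : Fin n ⊕ Fin n → ℂ) :
    vecMulVec a b *ᵥ x = (b ⬝ᵥ x) • a := by
  funext i
  simp only [vecMulVec_apply, mulVec, dotProduct, Pi.smul_apply, smul_eq_mul,
    Finset.sum_mul, Finset.mul_sum]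
  exact Finset.sum_congr rfl fun j _ => by ring

lemma mat_ext_of_forms {A B : Matrix (Fin n ⊕ Fin n) (Fin n ⊕ Fin n) ℂ}
    (h : ∀ x y, x ⬝ᵥ (A *ᵥ y) = x ⬝ᵥ (B *ᵥ y)) : A = B := by
  ext i j
  have := h (Pi.single i 1) (Pi.single j 1)
  simpa [mulVec_single, single_dotProduct] using this

/-- Symplectic transvection. -/
noncomputable def Tv (n : ℕ) (v : Fin n ⊕ Fin n → ℂ) (c : ℂ) :
    Matrix (Fin n ⊕ Fin n) (Fin n ⊕ Fin n) ℂ :=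
  1 + c • vecMulVec v ((Matrix.J (Fin n) ℂ) *ᵥ v)

lemma Tv_mulVec (v : Fin n ⊕ Fin n → ℂ) (c : ℂ) (x : Fin n ⊕ Fin n → ℂ) :
    Tv n v c *ᵥ x = x + (c * om n x v) • v := by
  rw [Tv, add_mulVec, one_mulVec, smul_mulVec, _root_.vecMulVec_mulVec]
  rw [show (Matrix.J (Fin n) ℂ *ᵥ v) ⬝ᵥ x = om n x v from dotProduct_comm _ _]
  rw [smul_smul]

lemma om_Tv (v : Fin n ⊕ Fin n → ℂ) (c : ℂ) (x y : Fin n ⊕ Fin n → ℂ) :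
    om n (Tv n v c *ᵥ x) (Tv n v c *ᵥ y) = om n x y := by
  rw [Tv_mulVec, Tv_mulVec, om_add_left, om_add_right, om_add_right, om_smul_left,
    om_smul_right, om_smul_right, om_smul_left, om_self]
  have h := om_skew v y
  ring_nf
  rw [om_skew y v]
  ring

lemma Tv_mem (v : Fin n ⊕ Fin n → ℂ) (c : ℂ) : Tv n v c ∈ Matrix.symplecticGroup (Fin n) ℂ := by
  rw [SymplecticGroup.mem_iff']
  apply mat_ext_of_forms
  intro x y
  rw [← mulVec_mulVec, ← mulVec_mulVec, ← dot_shift]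
  exact om_Tv v c x y

lemma om_symplectic {g : Matrix (Fin n ⊕ Fin n) (Fin n ⊕ Fin n) ℂ}
    (hg : g ∈ Matrix.symplecticGroup (Fin n) ℂ) (x y : Fin n ⊕ Fin n → ℂ) :
    om n (g *ᵥ x) (g *ᵥ y) = om n x y := by
  rw [SymplecticGroup.mem_iff'] at hg
  rw [om, dot_shift, mulVec_mulVec, mulVec_mulVec, hg, om]

/-- Transitivity of the symplectic group on nonzero vectors. -/
lemma trans_vec {x y : Fin n ⊕ Fin n → ℂ} (hx : x ≠ 0) (hy : y ≠ 0) :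
    ∃ g ∈ Matrix.symplecticGroup (Fin n) ℂ, g *ᵥ x = y := by
  -- first, the case where om x y ≠ 0
  have step : ∀ a b : Fin n ⊕ Fin n → ℂ, om n a b ≠ 0 →
      ∃ g ∈ Matrix.symplecticGroup (Fin n) ℂ, g *ᵥ a = b := by
    intro a b hab
    refine ⟨Tv n (b - a) (om n a b)⁻¹, Tv_mem _ _, ?_⟩
    rw [Tv_mulVec, om_sub_right, om_self, sub_zero]
    rw [inv_mul_cancel₀ hab, one_smul]
    abel
  by_cases hxy : om n x y ≠ 0
  · exact step x y hxy
  push_neg at hxy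
  -- find z with om x z ≠ 0 and om y z ≠ 0
  have hx' : ∃ z₁, om n x z₁ ≠ 0 := by
    by_contra h; push_neg at h; exact hx (om_nondeg h)
  have hy' : ∃ z₂, om n y z₂ ≠ 0 := by
    by_contra h; push_neg at h; exact hy (om_nondeg h)
  obtain ⟨z₁, hz₁⟩ := hx'
  obtain ⟨z₂, hz₂⟩ := hy'
  have hz : ∃ z, om n x z ≠ 0 ∧ om n y z ≠ 0 := by
    by_cases h1 : om n y z₁ ≠ 0
    · exact ⟨z₁, hz₁, h1⟩
    by_cases h2 : om n x z₂ ≠ 0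
    · exact ⟨z₂, h2, hz₂⟩
    push_neg at h1 h2
    exact ⟨z₁ + z₂, by rw [om_add_right, h2]; simpa using hz₁,
      by rw [om_add_right, h1]; simpa using hz₂⟩
  obtain ⟨z, hz1, hz2⟩ := hz
  obtain ⟨g₁, hg₁, hg₁x⟩ := step x z hz1
  have hzy : om n z y ≠ 0 := by
    rw [om_skew]; simpa using hz2
  obtain ⟨g₂, hg₂, hg₂z⟩ := step z y hzy
  exact ⟨g₂ * g₁, mul_mem hg₂ hg₁, by rw [← mulVec_mulVec, hg₁x, hg₂z]⟩

/-- Witt-type: stabilizer of `x` acts transitively on suitable vectors with the same pairing. -/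
lemma trans_stab {x y y' : Fin n ⊕ Fin n → ℂ} (hxy : om n x y = om n x y')
    (hy : ∀ c : ℂ, y ≠ c • x) (hy' : ∀ c : ℂ, y' ≠ c • x) :
    ∃ g ∈ Matrix.symplecticGroup (Fin n) ℂ, g *ᵥ x = x ∧ g *ᵥ y = y' := by
  -- one transvection step, fixing x
  have step : ∀ a b : Fin n ⊕ Fin n → ℂ, om n x a = om n x b → om n a b ≠ 0 →
      ∃ g ∈ Matrix.symplecticGroup (Fin n) ℂ, g *ᵥ x = x ∧ g *ᵥ a = b := by
    intro a b hxab hab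
    refine ⟨Tv n (b - a) (om n a b)⁻¹, Tv_mem _ _, ?_, ?_⟩
    · rw [Tv_mulVec, om_sub_right, hxab, sub_self, mul_zero, zero_smul, add_zero]
    · rw [Tv_mulVec, om_sub_right, om_self, sub_zero, inv_mul_cancel₀ hab, one_smul]
      abel
  by_cases hyy : om n y y' ≠ 0
  · exact step y y' hxy hyy
  push_neg at hyy
  by_cases heq : y = y'
  · exact ⟨1, one_mem _, by simp, by simp [heq]⟩
  -- find w with om x w = 0, om y w ≠ 0, om y' w ≠ 0
  have haux : ∀ z : Fin n ⊕ Fin n → ℂ, (∀ c : ℂ, z ≠ c • x) →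
      ∃ w, om n x w = 0 ∧ om n z w ≠ 0 := by
    intro z hz
    by_contra h; push_neg at h
    obtain ⟨c, hc⟩ := om_ker_le (x := x) (y := z) (fun w hw => by
      by_contra h2; exact h2 (h w hw))
    exact hz c hc
  obtain ⟨w₁, hw₁0, hw₁⟩ := haux y hy
  obtain ⟨w₂, hw₂0, hw₂⟩ := haux y' hy'
  have hw : ∃ w, om n x w = 0 ∧ om n y w ≠ 0 ∧ om n y' w ≠ 0 := by
    by_cases h1 : om n y' w₁ ≠ 0
    · exact ⟨w₁, hw₁0, hw₁, h1⟩
    by_cases h2 : om n y w₂ ≠ 0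
    · exact ⟨w₂, hw₂0, h2, hw₂⟩
    push_neg at h1 h2
    exact ⟨w₁ + w₂, by rw [om_add_right, hw₁0, hw₂0, add_zero],
      by rw [om_add_right, h2, add_zero]; exact hw₁,
      by rw [om_add_right, h1, zero_add]; exact hw₂⟩
  obtain ⟨w, hw0, hwy, hwy'⟩ := hw
  set z := y + w with hzdef
  have hxz : om n x z = om n x y := by rw [hzdef, om_add_right, hw0, add_zero]
  have hz1 : om n y z ≠ 0 := by
    rw [hzdef, om_add_right, om_self, zero_add]; exact hwy
  have hz2 : om n z y' ≠ 0 := by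
    rw [hzdef, om_add_left, hyy, zero_add, om_skew]
    simpa using hwy'
  obtain ⟨g₁, hg₁, hg₁x, hg₁y⟩ := step y z hxz.symm hz1
  obtain ⟨g₂, hg₂, hg₂x, hg₂z⟩ := step z y' (hxz.trans hxy) hz2
  exact ⟨g₂ * g₁, mul_mem hg₂ hg₁, by rw [← mulVec_mulVec, hg₁x, hg₂x],
    by rw [← mulVec_mulVec, hg₁y, hg₂z]⟩

lemma symp_mulVec_injective {g : Matrix (Fin n ⊕ Fin n) (Fin n ⊕ Fin n) ℂ}
    (hg : g ∈ Matrix.symplecticGroup (Fin n) ℂ) : Function.Injective g.mulVec :=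
  mulVec_injective_iff_isUnit.mpr ((Matrix.isUnit_iff_isUnit_det g).mpr
    (SymplecticGroup.symplectic_det hg))

/-- Transitivity of the symplectic group on pairs with equal pairing. -/
lemma trans_pair {x y x' y' : Fin n ⊕ Fin n → ℂ} (hx : x ≠ 0) (hx' : x' ≠ 0)
    (hy : ∀ c : ℂ, y ≠ c • x) (hy' : ∀ c : ℂ, y' ≠ c • x')
    (hω : om n x y = om n x' y') :
    ∃ g ∈ Matrix.symplecticGroup (Fin n) ℂ, g *ᵥ x = x' ∧ g *ᵥ y = y' := by
  obtain ⟨g₁, hg₁, hg₁x⟩ := trans_vec hx hx'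
  set y₁ := g₁ *ᵥ y with hy₁def
  have h1 : om n x' y₁ = om n x' y' := by
    rw [hy₁def, ← hg₁x, om_symplectic hg₁, hω, hg₁x]
  have h2 : ∀ c : ℂ, y₁ ≠ c • x' := by
    intro c hc
    apply hy c
    apply symp_mulVec_injective hg₁
    rw [← hy₁def, hc, ← hg₁x, ← mulVec_smul]
  obtain ⟨g₂, hg₂, hg₂x, hg₂y⟩ := trans_stab h1 h2 hy'
  exact ⟨g₂ * g₁, mul_mem hg₂ hg₁, by rw [← mulVec_mulVec, hg₁x, hg₂x],
    by rw [← mulVec_mulVec, ← hy₁def, hg₂y]⟩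

lemma vecMulVec_transpose (a : Fin n ⊕ Fin n → ℂ) :
    (vecMulVec a a)ᵀ = vecMulVec a a := by
  ext i j; simp [vecMulVec_apply, transpose_apply, mul_comm]

lemma rank_vecMulVec_le (a b : Fin n ⊕ Fin n → ℂ) : (vecMulVec a b).rank ≤ 1 := by
  rw [vecMulVec_eq Unit]
  calc (replicateCol Unit a * replicateRow Unit b).rank ≤ (replicateCol Unit a).rank := rank_mul_le_left _ _
    _ ≤ Fintype.card Unit := rank_le_card_width _
    _ = 1 := by simp

lemma rank_pos_of_ne_zero {M : Matrix (Fin n ⊕ Fin n) (Fin n ⊕ Fin n) ℂ} (h : M ≠ 0) :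
    1 ≤ M.rank := by
  by_contra hr
  push_neg at hr
  interval_cases hr' : M.rank
  · apply h
    have h0 : LinearMap.range M.mulVecLin = ⊥ := by
      rw [← Submodule.finrank_eq_zero]
      exact hr'
    have h1 : M.mulVecLin = 0 := LinearMap.range_eq_bot.mp h0
    ext i j
    have := congrFun (congrArg DFunLike.coe h1) (Pi.single j 1)
    have h2 := congrFun this i
    rw [mulVecLin_apply] at h2
    simpa [mulVec_single] using h2

lemma peel {M : Matrix (Fin n ⊕ Fin n) (Fin n ⊕ Fin n) ℂ} (hsym : Mᵀ = M)
    {u : Fin n ⊕ Fin n → ℂ} (hq : u ⬝ᵥ (M *ᵥ u) ≠ 0) :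
    ∃ x M₁, x ≠ 0 ∧ M = vecMulVec x x + M₁ ∧ M₁ᵀ = M₁ ∧ M₁.rank < M.rank := by
  obtain ⟨d, hd⟩ := IsAlgClosed.exists_pow_nat_eq (u ⬝ᵥ (M *ᵥ u)) (n := 2) (by norm_num)
  have hd0 : d ≠ 0 := by rintro rfl; rw [← hd] at hq; simpa using hq
  set x := d⁻¹ • (M *ᵥ u) with hxdef
  have hMu0 : M *ᵥ u ≠ 0 := by rintro h; rw [h] at hq; simp at hq
  have hx0 : x ≠ 0 := by simp [hxdef, smul_eq_zero, hd0, hMu0]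
  set M₁ := M - vecMulVec x x with hM₁def
  have hxu : x ⬝ᵥ u = d := by
    rw [hxdef, smul_dotProduct, dot_shift, hsym, smul_eq_mul, ← hd]
    field_simp
  have hM₁u : M₁ *ᵥ u = 0 := by
    rw [hM₁def, sub_mulVec, _root_.vecMulVec_mulVec, hxu, hxdef, smul_smul,
      mul_inv_cancel₀ hd0, one_smul, sub_self]
  have hker : ∀ w, M *ᵥ w = 0 → M₁ *ᵥ w = 0 := by
    intro w hw
    have hxw : x ⬝ᵥ w = 0 := by
      rw [hxdef, smul_dotProduct, dot_shift, hsym, hw]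
      simp
    rw [hM₁def, sub_mulVec, hw, _root_.vecMulVec_mulVec, hxw, zero_smul, sub_self]
  have hlt : (LinearMap.ker M.mulVecLin) < LinearMap.ker M₁.mulVecLin := by
    rw [lt_iff_le_and_ne]
    constructor
    · intro w hw
      rw [LinearMap.mem_ker, mulVecLin_apply] at hw ⊢
      exact hker w hw
    · intro hEq
      have hu : u ∈ LinearMap.ker M₁.mulVecLin := by
        rw [LinearMap.mem_ker, mulVecLin_apply]; exact hM₁u
      rw [← hEq, LinearMap.mem_ker, mulVecLin_apply] at hu
      exact hMu0 hu
  have hfr := Submodule.finrank_lt_finrank_of_lt hlt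
  have h1 := LinearMap.finrank_range_add_finrank_ker M.mulVecLin
  have h2 := LinearMap.finrank_range_add_finrank_ker M₁.mulVecLin
  refine ⟨x, M₁, hx0, by rw [hM₁def]; abel, ?_, ?_⟩
  · rw [hM₁def, transpose_sub, hsym, vecMulVec_transpose]
  · unfold Matrix.rank
    omega

lemma exists_q_ne_zero {M : Matrix (Fin n ⊕ Fin n) (Fin n ⊕ Fin n) ℂ} (hsym : Mᵀ = M)
    (h0 : M ≠ 0) : ∃ u, u ⬝ᵥ (M *ᵥ u) ≠ 0 := by
  by_contra h
  push_neg at h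
  apply h0
  have key : ∀ u v, u ⬝ᵥ (M *ᵥ v) = 0 := by
    intro u v
    have h1 := h (u + v)
    have h2 : v ⬝ᵥ (M *ᵥ u) = u ⬝ᵥ (M *ᵥ v) := by
      rw [dotProduct_comm, dot_shift, hsym]
    rw [mulVec_add, dotProduct_add, add_dotProduct, add_dotProduct, h u, h v, h2] at h1
    have : (2 : ℂ) * (u ⬝ᵥ (M *ᵥ v)) = 0 := by linear_combination h1
    simpa using this
  ext i j
  have := key (Pi.single i 1) (Pi.single j 1)
  simpa [mulVec_single, single_dotProduct] using this

lemma smul_vecMulVec (c : ℂ) (a b : Fin n ⊕ Fin n → ℂ) :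
    vecMulVec (c • a) b = c • vecMulVec a b := by
  ext i j; simp [vecMulVec_apply]; ring

lemma decomp {M : Matrix (Fin n ⊕ Fin n) (Fin n ⊕ Fin n) ℂ} (hsym : Mᵀ = M)
    (h0 : M ≠ 0) (hr : M.rank ≤ 2) :
    (M.rank = 1 ∧ ∃ x, x ≠ 0 ∧ M = vecMulVec x x) ∨
    (M.rank = 2 ∧ ∃ x y, x ≠ 0 ∧ (∀ c : ℂ, y ≠ c • x) ∧
      M = vecMulVec x x + vecMulVec y y) := by
  obtain ⟨u, hq⟩ := exists_q_ne_zero hsym h0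
  obtain ⟨x, M₁, hx0, hMeq, hM₁sym, hlt⟩ := peel hsym hq
  have hrpos := rank_pos_of_ne_zero h0
  by_cases hM₁ : M₁ = 0
  · left
    subst hM₁
    rw [add_zero] at hMeq
    have hle : M.rank ≤ 1 := hMeq ▸ _root_.rank_vecMulVec_le x x
    exact ⟨le_antisymm hle hrpos, x, hx0, hMeq⟩
  · right
    have hM₁pos := rank_pos_of_ne_zero hM₁
    have hr2 : M.rank = 2 := by omega
    obtain ⟨u₁, hq₁⟩ := exists_q_ne_zero hM₁sym hM₁
    obtain ⟨z, M₂, hz0, hM₁eq, hM₂sym, hlt₂⟩ := peel hM₁sym hq₁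
    have hM₂0 : M₂ = 0 := by
      by_contra h
      have := rank_pos_of_ne_zero h
      omega
    subst hM₂0
    rw [add_zero] at hM₁eq
    refine ⟨hr2, x, z, hx0, ?_, by rw [hMeq, hM₁eq]⟩
    intro c hc
    have : M = vecMulVec ((1 + c * c) • x) x := by
      rw [hMeq, hM₁eq, hc, show (c : ℂ) • x = c • x from rfl]
      ext i j
      simp [vecMulVec_apply]
      ring
    have := this ▸ _root_.rank_vecMulVec_le ((1 + c * c) • x) x
    omega

lemma vecMulVec_smul_right (c : ℂ) (a b : Fin n ⊕ Fin n → ℂ) :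
    vecMulVec a (c • b) = c • vecMulVec a b := by
  ext i j; simp [vecMulVec_apply]; ring

lemma mat_ext_mulVec {A B : Matrix (Fin n ⊕ Fin n) (Fin n ⊕ Fin n) ℂ}
    (h : ∀ v, A *ᵥ v = B *ᵥ v) : A = B := by
  ext i j
  have := congrFun (h (Pi.single j 1)) i
  simpa [mulVec_single] using this

lemma congr_vecMulVec (g : Matrix (Fin n ⊕ Fin n) (Fin n ⊕ Fin n) ℂ)
    (a b : Fin n ⊕ Fin n → ℂ) :
    g * vecMulVec a b * gᵀ = vecMulVec (g *ᵥ a) (g *ᵥ b) := by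
  apply mat_ext_mulVec
  intro v
  rw [← mulVec_mulVec, ← mulVec_mulVec, vecMulVec_mulVec, vecMulVec_mulVec,
    mulVec_smul, dot_shift]

lemma hasIso_iff_om (M : Matrix (Fin n ⊕ Fin n) (Fin n ⊕ Fin n) ℂ) :
    HasIsotropicRange n M ↔ ∀ u v, om n (M *ᵥ u) (M *ᵥ v) = 0 := Iff.rfl

lemma iso_vecMulVec (x : Fin n ⊕ Fin n → ℂ) : HasIsotropicRange n (vecMulVec x x) := by
  intro u v
  show om n _ _ = 0
  rw [vecMulVec_mulVec, vecMulVec_mulVec, om_smul_left, om_smul_right, om_self]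
  ring

lemma iso_pair_iff {x y : Fin n ⊕ Fin n → ℂ} (hx : x ≠ 0) (hy : ∀ c : ℂ, y ≠ c • x) :
    HasIsotropicRange n (vecMulVec x x + vecMulVec y y) ↔ om n x y = 0 := by
  set M := vecMulVec x x + vecMulVec y y with hMdef
  have hMv : ∀ u, M *ᵥ u = (x ⬝ᵥ u) • x + (y ⬝ᵥ u) • y := by
    intro u
    rw [hMdef, add_mulVec, vecMulVec_mulVec, vecMulVec_mulVec]
  constructor
  · intro hiso
    have hx' : ∀ c : ℂ, x ≠ c • y := by
      intro c hc
      rcases eq_or_ne c 0 with h0 | h0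
      · exact hx (by simp [hc, h0])
      · exact hy c⁻¹ (by rw [hc, smul_smul]; field_simp; rw [one_smul])
    have hy0 : y ≠ 0 := fun h => hy 0 (by simp [h])
    obtain ⟨u, hu1, hu2⟩ := exists_dual hx hy
    obtain ⟨v, hv1, hv2⟩ := exists_dual hy0 hx'
    have h0 : om n (M *ᵥ u) (M *ᵥ v) = 0 := hiso u v
    rw [hMv u, hMv v, hu1, hu2, hv1, hv2] at h0
    simpa using h0
  · intro h u v
    show om n _ _ = 0
    rw [hMv, hMv]
    simp only [om_add_left, om_add_right, om_smul_left, om_smul_right, om_self, h]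
    rw [om_skew y x, h]
    ring

-- canonical basis vector lemmas
lemma single_ne_zero' (i : Fin n ⊕ Fin n) : (Pi.single i 1 : Fin n ⊕ Fin n → ℂ) ≠ 0 :=
  fun h => by simpa using congrFun h i

lemma om_single (i j : Fin n ⊕ Fin n) :
    om n (Pi.single i 1) (Pi.single j 1) = Matrix.J (Fin n) ℂ i j := by
  rw [om, mulVec_single_one]
  rw [single_dotProduct]
  simp

lemma single_not_smul {i j : Fin n ⊕ Fin n} (hij : i ≠ j) (c : ℂ) :
    (Pi.single i 1 : Fin n ⊕ Fin n → ℂ) ≠ c • (Pi.single j 1 : Fin n ⊕ Fin n → ℂ) := by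
  intro h
  have := congrFun h i
  simp [Pi.single_apply, hij, Ne.symm hij] at this

lemma J_inl_inr (a b : Fin n) :
    Matrix.J (Fin n) ℂ (Sum.inl a) (Sum.inr b) = if a = b then -1 else 0 := by
  rw [Matrix.J, fromBlocks_apply₁₂]
  simp [Matrix.one_apply]
  split <;> simp

lemma J_inl_inl (a b : Fin n) : Matrix.J (Fin n) ℂ (Sum.inl a) (Sum.inl b) = 0 := by
  rw [Matrix.J, fromBlocks_apply₁₁]
  rfl

/-- Reduction of a rank-one decomposed matrix to canonical form. -/
lemma reduce_rank1 (hn : 1 ≤ n) {M : Matrix (Fin n ⊕ Fin n) (Fin n ⊕ Fin n) ℂ}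
    {x : Fin n ⊕ Fin n → ℂ} (hx : x ≠ 0) (hMeq : M = vecMulVec x x) :
    ∃ g ∈ Matrix.symplecticGroup (Fin n) ℂ, ∃ l : ℂ, l ≠ 0 ∧
      g * M * gᵀ = l • vecMulVec (Pi.single (Sum.inl ⟨0, hn⟩) 1) (Pi.single (Sum.inl ⟨0, hn⟩) 1) := by
  obtain ⟨g, hg, hgx⟩ := trans_vec hx (single_ne_zero' (Sum.inl ⟨0, hn⟩))
  exact ⟨g, hg, 1, one_ne_zero, by rw [hMeq, congr_vecMulVec, hgx, one_smul]⟩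

/-- Reduction of a rank-two isotropic decomposed matrix to canonical form. -/
lemma reduce_iso (h2 : 2 ≤ n) {M : Matrix (Fin n ⊕ Fin n) (Fin n ⊕ Fin n) ℂ}
    {x y : Fin n ⊕ Fin n → ℂ} (hx : x ≠ 0) (hy : ∀ c : ℂ, y ≠ c • x)
    (hMeq : M = vecMulVec x x + vecMulVec y y) (hom : om n x y = 0) :
    ∃ g ∈ Matrix.symplecticGroup (Fin n) ℂ, ∃ l : ℂ, l ≠ 0 ∧
      g * M * gᵀ = l • (vecMulVec (Pi.single (Sum.inl ⟨0, by omega⟩) 1) (Pi.single (Sum.inl ⟨0, by omega⟩) 1)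
        + vecMulVec (Pi.single (Sum.inl ⟨1, h2⟩) 1) (Pi.single (Sum.inl ⟨1, h2⟩) 1)) := by
  have hne : (Sum.inl ⟨1, h2⟩ : Fin n ⊕ Fin n) ≠ Sum.inl ⟨0, by omega⟩ := by
    simp [Fin.ext_iff]
  obtain ⟨g, hg, hgx, hgy⟩ := trans_pair hx (single_ne_zero' (Sum.inl ⟨0, by omega⟩)) hy
    (single_not_smul hne) (by rw [hom, om_single, J_inl_inl])
  refine ⟨g, hg, 1, one_ne_zero, ?_⟩
  rw [hMeq, Matrix.mul_add, Matrix.add_mul, congr_vecMulVec, congr_vecMulVec, hgx, hgy, one_smul]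

/-- Reduction of a rank-two non-isotropic decomposed matrix to canonical form. -/
lemma reduce_noniso (hn : 1 ≤ n) {M : Matrix (Fin n ⊕ Fin n) (Fin n ⊕ Fin n) ℂ}
    {x y : Fin n ⊕ Fin n → ℂ} (hx : x ≠ 0) (hy : ∀ c : ℂ, y ≠ c • x)
    (hMeq : M = vecMulVec x x + vecMulVec y y) (hom : om n x y ≠ 0) :
    ∃ g ∈ Matrix.symplecticGroup (Fin n) ℂ, ∃ l : ℂ, l ≠ 0 ∧
      g * M * gᵀ = l • (vecMulVec (Pi.single (Sum.inl ⟨0, hn⟩) 1) (Pi.single (Sum.inl ⟨0, hn⟩) 1)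
        + vecMulVec (Pi.single (Sum.inr ⟨0, hn⟩) 1) (Pi.single (Sum.inr ⟨0, hn⟩) 1)) := by
  obtain ⟨d, hd⟩ := IsAlgClosed.exists_pow_nat_eq (-(om n x y)) (n := 2) (by norm_num)
  have hd0 : d ≠ 0 := by
    rintro rfl
    rw [zero_pow (by norm_num), eq_comm, neg_eq_zero] at hd
    exact hom hd
  set x' := d⁻¹ • x with hx'def
  set y' := d⁻¹ • y with hy'def
  have hx'0 : x' ≠ 0 := by simp [hx'def, smul_eq_zero, hd0, hx]
  have hy' : ∀ c : ℂ, y' ≠ c • x' := by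
    intro c hc
    apply hy c
    have := congrArg (fun v => d • v) hc
    simp only [hy'def, hx'def, smul_smul, mul_inv_cancel₀ hd0, one_smul] at this
    rw [this]
    congr 1
    field_simp
  have homm : om n x' y' = om n (Pi.single (Sum.inl ⟨0, hn⟩) 1) (Pi.single (Sum.inr ⟨0, hn⟩) 1) := by
    rw [om_single, J_inl_inr, if_pos rfl, hx'def, hy'def, om_smul_left, om_smul_right]
    have : d ^ 2 ≠ 0 := pow_ne_zero 2 hd0
    have homy : om n x y = -d ^ 2 := by linear_combination hd
    rw [homy]
    field_simp
  obtain ⟨g, hg, hgx, hgy⟩ := trans_pair hx'0 (single_ne_zero' (Sum.inl ⟨0, hn⟩)) hy'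
    (single_not_smul (by simp) ) homm
  refine ⟨g, hg, d * d, mul_ne_zero hd0 hd0, ?_⟩
  have hxx : x = d • x' := by rw [hx'def, smul_smul, mul_inv_cancel₀ hd0, one_smul]
  have hyy : y = d • y' := by rw [hy'def, smul_smul, mul_inv_cancel₀ hd0, one_smul]
  have hterm : ∀ a b : Fin n ⊕ Fin n → ℂ, vecMulVec (d • a) (d • b) = (d * d) • vecMulVec a b := by
    intro a b; ext i j; simp [vecMulVec_apply]; ring
  rw [hMeq, hxx, hyy, hterm, hterm, ← smul_add, Matrix.mul_smul, Matrix.smul_mul,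
    Matrix.mul_add, Matrix.add_mul, congr_vecMulVec, congr_vecMulVec, hgx, hgy]

lemma two_le_of_iso (hn : 1 ≤ n) {M : Matrix (Fin n ⊕ Fin n) (Fin n ⊕ Fin n) ℂ}
    (hr : M.rank = 2) (hiso : HasIsotropicRange n M) : 2 ≤ n := by
  by_contra h
  push_neg at h
  have hn1 : n = 1 := by omega
  have hfr : Module.finrank ℂ (Fin n ⊕ Fin n → ℂ) = 2 := by
    rw [Module.finrank_fintype_fun_eq_card]
    simp [hn1]
  have htop : LinearMap.range M.mulVecLin = ⊤ := by
    apply Submodule.eq_top_of_finrank_eq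
    rw [hfr]
    exact hr
  have hsurj := LinearMap.range_eq_top.mp htop
  obtain ⟨u, hu⟩ := hsurj (Pi.single (Sum.inl ⟨0, hn⟩) 1)
  obtain ⟨v, hv⟩ := hsurj (Pi.single (Sum.inr ⟨0, hn⟩) 1)
  have h0 : om n (M *ᵥ u) (M *ᵥ v) = 0 := hiso u v
  rw [show M *ᵥ u = M.mulVecLin u from rfl, show M *ᵥ v = M.mulVecLin v from rfl,
    hu, hv, om_single, J_inl_inr, if_pos rfl] at h0
  exact one_ne_zero (neg_eq_zero.mp h0)

lemma rank_smul_eq (l : ℂ) (hl : l ≠ 0) (N : Matrix (Fin n ⊕ Fin n) (Fin n ⊕ Fin n) ℂ) :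
    (l • N).rank = N.rank := by
  have hu : IsUnit (l • (1 : Matrix (Fin n ⊕ Fin n) (Fin n ⊕ Fin n) ℂ)).det := by
    rw [det_smul, det_one, mul_one]
    exact (pow_ne_zero _ hl).isUnit
  have h : l • N = N * (l • (1 : Matrix (Fin n ⊕ Fin n) (Fin n ⊕ Fin n) ℂ)) := by
    rw [Matrix.mul_smul, Matrix.mul_one]
  rw [h, rank_mul_eq_left_of_isUnit_det _ _ hu]

lemma rank_congr_symp {g M N : Matrix (Fin n ⊕ Fin n) (Fin n ⊕ Fin n) ℂ} {l : ℂ}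
    (hg : g ∈ Matrix.symplecticGroup (Fin n) ℂ) (hl : l ≠ 0) (h : g * M * gᵀ = l • N) :
    M.rank = N.rank := by
  have hdet := SymplecticGroup.symplectic_det hg
  have hdetT : IsUnit gᵀ.det := by rwa [det_transpose]
  calc M.rank = (g * M).rank := (rank_mul_eq_right_of_isUnit_det g M hdet).symm
    _ = (g * M * gᵀ).rank := (rank_mul_eq_left_of_isUnit_det gᵀ (g * M) hdetT).symm
    _ = (l • N).rank := by rw [h]
    _ = N.rank := rank_smul_eq l hl N

lemma iso_transport {g M N : Matrix (Fin n ⊕ Fin n) (Fin n ⊕ Fin n) ℂ} {l : ℂ}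
    (hg : g ∈ Matrix.symplecticGroup (Fin n) ℂ) (hl : l ≠ 0) (h : g * M * gᵀ = l • N)
    (hiso : HasIsotropicRange n M) : HasIsotropicRange n N := by
  intro u v
  show om n (N *ᵥ u) (N *ᵥ v) = 0
  have hN : N = l⁻¹ • (g * M * gᵀ) := by rw [h, smul_smul, inv_mul_cancel₀ hl, one_smul]
  have hNv : ∀ w, N *ᵥ w = l⁻¹ • (g *ᵥ (M *ᵥ (gᵀ *ᵥ w))) := by
    intro w
    rw [hN, smul_mulVec, mulVec_mulVec, mulVec_mulVec]
  rw [hNv, hNv, om_smul_left, om_smul_right, om_symplectic hg]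
  rw [show om n (M *ᵥ (gᵀ *ᵥ u)) (M *ᵥ (gᵀ *ᵥ v)) = 0 from hiso _ _]
  ring

lemma inv_mem_symp {g : Matrix (Fin n ⊕ Fin n) (Fin n ⊕ Fin n) ℂ}
    (hg : g ∈ Matrix.symplecticGroup (Fin n) ℂ) : g⁻¹ ∈ Matrix.symplecticGroup (Fin n) ℂ := by
  rw [SymplecticGroup.inv_eq_symplectic_inv g hg]
  exact mul_mem (mul_mem (SymplecticGroup.neg_mem (SymplecticGroup.J_mem _ _))
    (SymplecticGroup.transpose_mem hg)) (SymplecticGroup.J_mem _ _)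

lemma congr_symm_symp {g M N : Matrix (Fin n ⊕ Fin n) (Fin n ⊕ Fin n) ℂ} {l : ℂ}
    (hg : g ∈ Matrix.symplecticGroup (Fin n) ℂ) (hl : l ≠ 0) (h : g * M * gᵀ = l • N) :
    g⁻¹ * N * (g⁻¹)ᵀ = l⁻¹ • M := by
  have hdet := SymplecticGroup.symplectic_det hg
  have hdetT : IsUnit gᵀ.det := by rwa [det_transpose]
  have hN : N = l⁻¹ • (g * M * gᵀ) := by rw [h, smul_smul, inv_mul_cancel₀ hl, one_smul]
  rw [hN, transpose_nonsing_inv, Matrix.mul_smul, Matrix.smul_mul]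
  congr 1
  rw [Matrix.mul_assoc g M gᵀ, Matrix.nonsing_inv_mul_cancel_left _ _ hdet,
    Matrix.mul_nonsing_inv_cancel_right _ _ hdetT]

lemma compose_congr {M N C g₁ g₂ : Matrix (Fin n ⊕ Fin n) (Fin n ⊕ Fin n) ℂ} {l₁ l₂ : ℂ}
    (hg₁ : g₁ ∈ Matrix.symplecticGroup (Fin n) ℂ) (hg₂ : g₂ ∈ Matrix.symplecticGroup (Fin n) ℂ)
    (hl₁ : l₁ ≠ 0) (hl₂ : l₂ ≠ 0)
    (h₁ : g₁ * M * g₁ᵀ = l₁ • C) (h₂ : g₂ * N * g₂ᵀ = l₂ • C) :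
    ∃ g ∈ Matrix.symplecticGroup (Fin n) ℂ, ∃ l : ℂ, l ≠ 0 ∧ g * M * gᵀ = l • N := by
  have hsym := congr_symm_symp hg₂ hl₂ h₂
  refine ⟨g₂⁻¹ * g₁, mul_mem (inv_mem_symp hg₂) hg₁, l₁ * l₂⁻¹,
    mul_ne_zero hl₁ (inv_ne_zero hl₂), ?_⟩
  have step1 : (g₂⁻¹ * g₁) * M * (g₂⁻¹ * g₁)ᵀ = g₂⁻¹ * (g₁ * M * g₁ᵀ) * (g₂⁻¹)ᵀ := by
    rw [transpose_mul]
    simp only [Matrix.mul_assoc]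
  rw [step1, h₁, Matrix.mul_smul, Matrix.smul_mul, hsym, smul_smul]

/-- Two nonzero symmetric `2n×2n` complex matrices of rank at most two are congruent under
`Sp₂ₙ(ℂ)` up to a nonzero scalar iff they have the same rank and simultaneously isotropic
ranges; every such matrix is exactly one of: rank one; rank two with `J`-isotropic range;
rank two with non-isotropic range. -/
theorem stmt11 (n : ℕ) (hn : 1 ≤ n)
    (M N : Matrix (Fin n ⊕ Fin n) (Fin n ⊕ Fin n) ℂ)
    (hM : Mᵀ = M) (hN : Nᵀ = N) (hM0 : M ≠ 0) (hN0 : N ≠ 0)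
    (hMr : M.rank ≤ 2) (hNr : N.rank ≤ 2) :
    ((∃ g ∈ Matrix.symplecticGroup (Fin n) ℂ, ∃ l : ℂ, l ≠ 0 ∧ g * M * gᵀ = l • N) ↔
      (M.rank = N.rank ∧ (HasIsotropicRange n M ↔ HasIsotropicRange n N))) ∧
    (M.rank = 1 ∨
      (M.rank = 2 ∧ HasIsotropicRange n M) ∨
      (M.rank = 2 ∧ ¬ HasIsotropicRange n M)) := by
  constructor
  · constructor
    · rintro ⟨g, hg, l, hl, h⟩
      refine ⟨rank_congr_symp hg hl h, ?_, ?_⟩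
      · exact iso_transport hg hl h
      · exact iso_transport (inv_mem_symp hg) (inv_ne_zero hl) (congr_symm_symp hg hl h)
    · rintro ⟨hrank, hiso⟩
      rcases decomp hM hM0 hMr with ⟨hr1, x, hx, hMeq⟩ | ⟨hr2, x, y, hx, hy, hMeq⟩
      · -- rank one case
        rcases decomp hN hN0 hNr with ⟨hr1', z, hz, hNeq⟩ | ⟨hr2', _⟩
        · obtain ⟨g₁, hg₁, l₁, hl₁, h₁⟩ := reduce_rank1 hn hx hMeq
          obtain ⟨g₂, hg₂, l₂, hl₂, h₂⟩ := reduce_rank1 hn hz hNeq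
          exact compose_congr hg₁ hg₂ hl₁ hl₂ h₁ h₂
        · omega
      · -- rank two case
        rcases decomp hN hN0 hNr with ⟨hr1', _⟩ | ⟨hr2', x', y', hx', hy', hNeq⟩
        · omega
        · by_cases hc : om n x y = 0
          · have hisoM : HasIsotropicRange n M := by
              rw [hMeq]; exact (iso_pair_iff hx hy).mpr hc
            have hisoN : HasIsotropicRange n N := hiso.mp hisoM
            have hc' : om n x' y' = 0 := by
              rw [hNeq] at hisoN
              exact (iso_pair_iff hx' hy').mp hisoN
            have h2 : 2 ≤ n := two_le_of_iso hn hr2 hisoM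
            obtain ⟨g₁, hg₁, l₁, hl₁, h₁⟩ := reduce_iso h2 hx hy hMeq hc
            obtain ⟨g₂, hg₂, l₂, hl₂, h₂⟩ := reduce_iso h2 hx' hy' hNeq hc'
            exact compose_congr hg₁ hg₂ hl₁ hl₂ h₁ h₂
          · have hisoM : ¬ HasIsotropicRange n M := by
              rw [hMeq]
              intro hh
              exact hc ((iso_pair_iff hx hy).mp hh)
            have hc' : om n x' y' ≠ 0 := by
              intro hh
              apply hisoM
              apply hiso.mpr
              rw [hNeq]
              exact (iso_pair_iff hx' hy').mpr hh
            obtain ⟨g₁, hg₁, l₁, hl₁, h₁⟩ := reduce_noniso hn hx hy hMeq hc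
            obtain ⟨g₂, hg₂, l₂, hl₂, h₂⟩ := reduce_noniso hn hx' hy' hNeq hc'
            exact compose_congr hg₁ hg₂ hl₁ hl₂ h₁ h₂
  · rcases decomp hM hM0 hMr with ⟨hr1, _⟩ | ⟨hr2, _⟩
    · exact Or.inl hr1
    · by_cases hiso : HasIsotropicRange n M
      · exact Or.inr (Or.inl ⟨hr2, hiso⟩)
      · exact Or.inr (Or.inr ⟨hr2, hiso⟩)
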